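/- arXiv:2502.19578 — 4 statements merged into one kernel-verified Lean document; each statement's English description precedes it below -/
import Mathlib

section
/- Let A be Hermitian with orthonormal eigenbasis {ψ_j} and eigenvalues |λ_1| > |λ_2| ≥ ... ≥ |λ_n|. Let v be a unit vector, θ = ∠(v, ψ_1) with 0 < θ < π/2, and let e be a perturbation vector. If ‖e‖/|λ_1| < (1 - |λ_2/λ_1|) · cos(θ)·sin(θ) / (cos(θ) + sin(θ)), then ∠(Av + e, ψ_1) < ∠(v, ψ_1), i.e., tan ∠(Av + e, ψ_1) < tan ∠(v, ψ_1). -/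
set_option maxHeartbeats 1000000 in

/-- Inexact power iteration makes progress: for Hermitian `A` with orthonormal
eigenbasis `ψ`, eigenvalues `|λ₀| > |λ₁| ≥ |λ_j|` (j ≥ 1), unit vector `v` at angle `θ` to
`ψ₀` (with `cos θ = ‖P v‖ > 0`, `sin θ = ‖P⊥ v‖ > 0`), and perturbation `e` satisfying
`‖e‖/|λ₀| < (1 - |λ₁/λ₀|)·cos θ·sin θ/(cos θ + sin θ)`, we have
`tan ∠(Av + e, ψ₀) < tan ∠(v, ψ₀)`. -/
theorem stmt2 {n : ℕ} (A : Matrix (Fin (n + 2)) (Fin (n + 2)) ℂ)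
    (hA : A.IsHermitian)
    (ψ : Fin (n + 2) → EuclideanSpace ℂ (Fin (n + 2)))
    (hortho : Orthonormal ℂ ψ)
    (lam : Fin (n + 2) → ℂ)
    (heig : ∀ j, Matrix.toEuclideanLin A (ψ j) = lam j • ψ j)
    (hgap : ‖lam 1‖ < ‖lam 0‖)
    (hord : ∀ j, j ≠ 0 → ‖lam j‖ ≤ ‖lam 1‖)
    (v e : EuclideanSpace ℂ (Fin (n + 2)))
    (hv : ‖v‖ = 1)
    (θ : ℝ) (hθ0 : 0 < θ) (hθ1 : θ < Real.pi / 2)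
    (hcos : Real.cos θ = ‖(inner ℂ (ψ 0) v : ℂ) • ψ 0‖)
    (hsin : Real.sin θ = ‖v - (inner ℂ (ψ 0) v : ℂ) • ψ 0‖)
    (he : ‖e‖ / ‖lam 0‖
        < (1 - ‖lam 1‖ / ‖lam 0‖)
          * (Real.cos θ * Real.sin θ) / (Real.cos θ + Real.sin θ)) :
    let P : EuclideanSpace ℂ (Fin (n + 2)) → EuclideanSpace ℂ (Fin (n + 2)) :=
      fun w => (inner ℂ (ψ 0) w : ℂ) • ψ 0
    let z : EuclideanSpace ℂ (Fin (n + 2)) := Matrix.toEuclideanLin A v + e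
    ‖z - P z‖ / ‖P z‖ < ‖v - P v‖ / ‖P v‖ := by
  intro P z
  classical
  have hsym : (Matrix.toEuclideanLin A).IsSymmetric :=
    Matrix.isHermitian_iff_isSymmetric.mp hA
  set T := Matrix.toEuclideanLin A with hT
  have hψ0 : ‖ψ 0‖ = 1 := hortho.1 0
  have hspan : ⊤ ≤ Submodule.span ℂ (Set.range ψ) := by
    rw [hortho.linearIndependent.span_eq_top_of_card_eq_finrank (by simp)]
  let b : OrthonormalBasis (Fin (n+2)) ℂ (EuclideanSpace ℂ (Fin (n+2))) :=
    OrthonormalBasis.mk hortho hspan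
  have hb : ∀ j, b j = ψ j := fun j => congrFun (OrthonormalBasis.coe_mk hortho hspan) j
  have parseval : ∀ x : EuclideanSpace ℂ (Fin (n+2)),
      ‖x‖^2 = ∑ j, ‖(inner ℂ (ψ j) x : ℂ)‖^2 := by
    intro x
    have h1 : (inner ℂ x x : ℂ) = ∑ j, ((‖(inner ℂ (ψ j) x : ℂ)‖ : ℂ))^2 := by
      rw [← b.sum_inner_mul_inner x x]
      refine Finset.sum_congr rfl fun j _ => ?_
      rw [hb j, ← inner_conj_symm x (ψ j), mul_comm, Complex.mul_conj,
        Complex.normSq_eq_norm_sq]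
      norm_cast
    norm_cast at h1
    have h3 := congrArg Complex.re h1
    have h4 : (inner ℂ x x : ℂ).re = ‖x‖^2 := by
      rw [← RCLike.re_to_complex]
      exact inner_self_eq_norm_sq x
    rwa [h4, Complex.ofReal_re] at h3
  have hinner00 : (inner ℂ (ψ 0) (ψ 0) : ℂ) = 1 := by
    rw [inner_self_eq_norm_sq_to_K, hψ0]; norm_num
  have perp : ∀ x : EuclideanSpace ℂ (Fin (n+2)),
      ‖x - P x‖^2 = ∑ j ∈ Finset.univ.erase 0, ‖(inner ℂ (ψ j) x : ℂ)‖^2 := by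
    intro x
    rw [parseval (x - P x), ← Finset.sum_erase_add _ _ (Finset.mem_univ 0)]
    have h0 : (inner ℂ (ψ 0) (x - P x) : ℂ) = 0 := by
      simp [P, inner_sub_right, inner_smul_right, hinner00, hψ0]
    rw [h0, norm_zero, zero_pow (by norm_num : (2:ℕ) ≠ 0), add_zero]
    refine Finset.sum_congr rfl fun j hj => ?_
    have hj0 : j ≠ 0 := Finset.ne_of_mem_erase hj
    have hje : (inner ℂ (ψ j) (x - P x) : ℂ) = inner ℂ (ψ j) x := by
      simp [P, inner_sub_right, inner_smul_right, hortho.2 hj0]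
    rw [hje]
  have coefA : ∀ (j : Fin (n+2)) (w : EuclideanSpace ℂ (Fin (n+2))),
      (inner ℂ (ψ j) (T w) : ℂ) = (starRingEnd ℂ) (lam j) * inner ℂ (ψ j) w := by
    intro j w
    rw [← hsym (ψ j) w, heig j, inner_smul_left]
  set L0 := ‖lam 0‖ with hL0
  set L1 := ‖lam 1‖ with hL1
  set c := Real.cos θ with hc
  set s := Real.sin θ with hs
  set ε := ‖e‖ with hε
  have hPv : ‖P v‖ = c := hcos.symm
  have hsv : ‖v - P v‖ = s := hsin.symm
  have hPv' : ‖P v‖ = ‖(inner ℂ (ψ 0) v : ℂ)‖ := by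
    show ‖(inner ℂ (ψ 0) v : ℂ) • ψ 0‖ = _
    rw [norm_smul, hψ0, mul_one]
  have hcv : ‖(inner ℂ (ψ 0) v : ℂ)‖ = c := by rw [← hPv', hPv]
  have hcpos : 0 < c := by
    rw [hc]; exact Real.cos_pos_of_mem_Ioo ⟨by linarith [Real.pi_pos], hθ1⟩
  have hspos : 0 < s := by
    rw [hs]; exact Real.sin_pos_of_pos_of_lt_pi hθ0 (by linarith [Real.pi_pos])
  have hL1nn : 0 ≤ L1 := norm_nonneg _
  have hL0pos : 0 < L0 := lt_of_le_of_lt hL1nn hgap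
  have hεnn : 0 ≤ ε := norm_nonneg e
  have key : ε * (c + s) < (L0 - L1) * (c * s) := by
    rw [div_lt_div_iff₀ hL0pos (by positivity)] at he
    have h2 : (1 - L1/L0) * (c*s) * L0 = (L0 - L1) * (c*s) := by
      field_simp
    rw [h2] at he
    exact he
  have hPz_pos : 0 < L0 * c - ε := by
    nlinarith [key, hspos, hcpos, hεnn, mul_nonneg hεnn hcpos.le,
      mul_nonneg hL1nn (mul_nonneg hcpos.le hspos.le)]
  have hAv_par : ‖(inner ℂ (ψ 0) (T v) : ℂ)‖ = L0 * ‖(inner ℂ (ψ 0) v : ℂ)‖ := by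
    rw [coefA 0 v, norm_mul, RCLike.norm_conj]
  have hPz : L0 * c - ε ≤ ‖P z‖ := by
    have hPzn : ‖P z‖ = ‖(inner ℂ (ψ 0) z : ℂ)‖ := by
      show ‖(inner ℂ (ψ 0) z : ℂ) • ψ 0‖ = _
      rw [norm_smul, hψ0, mul_one]
    have hsplit : (inner ℂ (ψ 0) z : ℂ) = inner ℂ (ψ 0) (T v) + inner ℂ (ψ 0) e := by
      simp [z, inner_add_right, hT]
    have h1 : ‖(inner ℂ (ψ 0) (T v) : ℂ)‖ - ‖(inner ℂ (ψ 0) e : ℂ)‖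
        ≤ ‖(inner ℂ (ψ 0) (T v) : ℂ) + (inner ℂ (ψ 0) e : ℂ)‖ := by
      have := norm_add_le ((inner ℂ (ψ 0) (T v) : ℂ) + (inner ℂ (ψ 0) e : ℂ)) (-(inner ℂ (ψ 0) e : ℂ))
      simp only [add_neg_cancel_right, norm_neg] at this
      linarith
    have h2 : ‖(inner ℂ (ψ 0) e : ℂ)‖ ≤ ε := by
      calc ‖(inner ℂ (ψ 0) e : ℂ)‖ ≤ ‖ψ 0‖ * ‖e‖ := norm_inner_le_norm _ _
        _ = ε := by rw [hψ0, one_mul]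
    rw [hPzn, hsplit]
    calc L0 * c - ε ≤ ‖(inner ℂ (ψ 0) (T v) : ℂ)‖ - ‖(inner ℂ (ψ 0) e : ℂ)‖ := by
          rw [hAv_par, hcv]; linarith
      _ ≤ _ := h1
  have hAv_perp : ‖T v - P (T v)‖ ≤ L1 * s := by
    apply le_of_pow_le_pow_left₀ two_ne_zero (by positivity)
    rw [mul_pow, perp (T v), ← hsv, perp v, Finset.mul_sum]
    refine Finset.sum_le_sum fun j hj => ?_
    have hj0 : j ≠ 0 := Finset.ne_of_mem_erase hj
    rw [coefA j v, norm_mul, RCLike.norm_conj, mul_pow]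
    have hle : ‖lam j‖ ≤ L1 := by exact hord j hj0
    gcongr
  have he_perp : ‖e - P e‖ ≤ ε := by
    apply le_of_pow_le_pow_left₀ two_ne_zero hεnn
    rw [perp e, hε, parseval e]
    exact Finset.sum_le_sum_of_subset_of_nonneg (Finset.erase_subset _ _)
      (fun j _ _ => by positivity)
  have hz_split : z - P z = (T v - P (T v)) + (e - P e) := by
    show (T v + e) - (inner ℂ (ψ 0) (T v + e) : ℂ) • ψ 0 = _
    rw [inner_add_right, add_smul]
    show _ = (T v - (inner ℂ (ψ 0) (T v) : ℂ) • ψ 0) + (e - (inner ℂ (ψ 0) e : ℂ) • ψ 0)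
    abel
  have hz_perp : ‖z - P z‖ ≤ L1 * s + ε := by
    rw [hz_split]
    exact le_trans (norm_add_le _ _) (by linarith [hAv_perp, he_perp])
  rw [hsv, hPv]
  calc ‖z - P z‖ / ‖P z‖ ≤ (L1 * s + ε) / (L0 * c - ε) :=
        div_le_div₀ (by positivity) hz_perp hPz_pos hPz
    _ < s / c := by
        rw [div_lt_div_iff₀ hPz_pos hcpos]
        nlinarith [key]
end

section
/- Let A be Hermitian with eigendecomposition A = Ψ Λ Ψ^*, eigenvalues ordered |λ_1| ≥ ... ≥ |λ_m| > |λ_{m+1}| ≥ ... ≥ |λ_n| with λ_m ≠ 0. Let Ψ_{≤m} contain the first m eigenvectors and Ψ_{>m} the rest. For V ∈ ℂ^{n×m} with Ψ_{≤m}^* V invertible, define T_V = Ψ_{>m}^* V (Ψ_{≤m}^* V)^{-1}. Then σ_1(T_{AV}) ≤ |λ_{m+1}/λ_m| · σ_1(T_V), where σ_1 denotes the largest singular value. -/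
open Matrix
open scoped Matrix.Norms.L2Operator

lemma diag_opNorm_le {p : ℕ} (d : Fin p → ℂ) (c : ℝ) (hc : 0 ≤ c)
    (hd : ∀ i, ‖d i‖ ≤ c) :
    ‖(Matrix.diagonal d : Matrix (Fin p) (Fin p) ℂ)‖ ≤ c := by
  rw [Matrix.l2_opNorm_def]
  apply ContinuousLinearMap.opNorm_le_bound _ hc
  intro x
  have hx : ((LinearEquiv.trans Matrix.toEuclideanLin LinearMap.toContinuousLinearMap)
      (Matrix.diagonal d)) x = Matrix.toEuclideanLin (Matrix.diagonal d) x := rfl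
  rw [hx]
  have h1 : ∀ y : EuclideanSpace ℂ (Fin p), ‖y‖ = Real.sqrt (∑ i, ‖y i‖ ^ 2) := by
    intro y; rw [EuclideanSpace.norm_eq]
  rw [h1, h1]
  rw [← Real.sqrt_sq hc, ← Real.sqrt_mul (by positivity)]
  apply Real.sqrt_le_sqrt
  rw [Finset.mul_sum]
  apply Finset.sum_le_sum
  intro i _
  have : (Matrix.toEuclideanLin (Matrix.diagonal d) x) i = d i * x i := by
    simp [Matrix.toEuclideanLin_apply, Matrix.mulVec_diagonal]
  rw [this]
  rw [norm_mul, mul_pow]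
  gcongr
  exact hd i

/-- One step of exact subspace iteration contracts the tangent of the largest
principal angle. -/
theorem stmt5 {m k : ℕ}
    (A : Matrix (Fin (m + 1 + (k + 1))) (Fin (m + 1 + (k + 1))) ℂ)
    (hA : A.IsHermitian)
    (Ψ1 : Matrix (Fin (m + 1 + (k + 1))) (Fin (m + 1)) ℂ)
    (Ψ2 : Matrix (Fin (m + 1 + (k + 1))) (Fin (k + 1)) ℂ)
    (hU11 : Ψ1ᴴ * Ψ1 = 1) (hU22 : Ψ2ᴴ * Ψ2 = 1) (hU12 : Ψ1ᴴ * Ψ2 = 0)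
    (hcomplete : Ψ1 * Ψ1ᴴ + Ψ2 * Ψ2ᴴ = 1)
    (lam1 : Fin (m + 1) → ℂ) (lam2 : Fin (k + 1) → ℂ)
    (heig1 : A * Ψ1 = Ψ1 * Matrix.diagonal lam1)
    (heig2 : A * Ψ2 = Ψ2 * Matrix.diagonal lam2)
    (hord1 : ∀ i i' : Fin (m + 1), i ≤ i' → ‖lam1 i'‖ ≤ ‖lam1 i‖)
    (hord2 : ∀ j j' : Fin (k + 1), j ≤ j' → ‖lam2 j'‖ ≤ ‖lam2 j‖)
    (hgap : ‖lam2 0‖ < ‖lam1 (Fin.last m)‖)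
    (hm0 : lam1 (Fin.last m) ≠ 0)
    (V : Matrix (Fin (m + 1 + (k + 1))) (Fin (m + 1)) ℂ)
    (hV : IsUnit (Ψ1ᴴ * V)) :
    ‖Ψ2ᴴ * (A * V) * (Ψ1ᴴ * (A * V))⁻¹‖
      ≤ (‖lam2 0‖ / ‖lam1 (Fin.last m)‖)
        * ‖Ψ2ᴴ * V * (Ψ1ᴴ * V)⁻¹‖ := by
  -- realness of eigenvalues
  have hreal1 : ∀ i, (starRingEnd ℂ) (lam1 i) = lam1 i := by
    intro i
    have h1 : Ψ1ᴴ * A * Ψ1 = Matrix.diagonal lam1 := by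
      rw [Matrix.mul_assoc, heig1, ← Matrix.mul_assoc, hU11, Matrix.one_mul]
    have h2 : (Ψ1ᴴ * A * Ψ1)ᴴ = Ψ1ᴴ * A * Ψ1 := by
      simp only [Matrix.conjTranspose_mul, Matrix.conjTranspose_conjTranspose, hA.eq]
      rw [Matrix.mul_assoc]
    rw [h1, Matrix.diagonal_conjTranspose] at h2
    have := congrFun (congrFun h2 i) i
    simpa using this
  have hreal2 : ∀ j, (starRingEnd ℂ) (lam2 j) = lam2 j := by
    intro j
    have h1 : Ψ2ᴴ * A * Ψ2 = Matrix.diagonal lam2 := by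
      rw [Matrix.mul_assoc, heig2, ← Matrix.mul_assoc, hU22, Matrix.one_mul]
    have h2 : (Ψ2ᴴ * A * Ψ2)ᴴ = Ψ2ᴴ * A * Ψ2 := by
      simp only [Matrix.conjTranspose_mul, Matrix.conjTranspose_conjTranspose, hA.eq]
      rw [Matrix.mul_assoc]
    rw [h1, Matrix.diagonal_conjTranspose] at h2
    have := congrFun (congrFun h2 j) j
    simpa using this
  -- left eigenvector relations
  have hL1 : Ψ1ᴴ * A = Matrix.diagonal lam1 * Ψ1ᴴ := by
    have := congrArg Matrix.conjTranspose heig1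
    simp only [Matrix.conjTranspose_mul, Matrix.conjTranspose_conjTranspose, hA.eq,
      Matrix.diagonal_conjTranspose] at this
    rw [this]
    congr 1
    exact congrArg Matrix.diagonal (funext fun i => hreal1 i)
  have hL2 : Ψ2ᴴ * A = Matrix.diagonal lam2 * Ψ2ᴴ := by
    have := congrArg Matrix.conjTranspose heig2
    simp only [Matrix.conjTranspose_mul, Matrix.conjTranspose_conjTranspose, hA.eq,
      Matrix.diagonal_conjTranspose] at this
    rw [this]
    congr 1
    exact congrArg Matrix.diagonal (funext fun j => hreal2 j)
  have hAV1 : Ψ1ᴴ * (A * V) = Matrix.diagonal lam1 * (Ψ1ᴴ * V) := by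
    rw [← Matrix.mul_assoc, hL1, Matrix.mul_assoc]
  have hAV2 : Ψ2ᴴ * (A * V) = Matrix.diagonal lam2 * (Ψ2ᴴ * V) := by
    rw [← Matrix.mul_assoc, hL2, Matrix.mul_assoc]
  -- nonzero eigenvalues in head block
  have habs_pos : 0 < ‖lam1 (Fin.last m)‖ :=
    norm_pos_iff.mpr hm0
  have hlam1_ne : ∀ i, lam1 i ≠ 0 := by
    intro i
    have := hord1 i (Fin.last m) (Fin.le_last i)
    intro h
    rw [h] at this
    simp at this
    exact absurd this hm0
  -- inverse of diagonal
  set Dinv : Matrix (Fin (m + 1)) (Fin (m + 1)) ℂ :=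
    Matrix.diagonal (fun i => (lam1 i)⁻¹) with hDinv
  have hDmul : Matrix.diagonal lam1 * Dinv = 1 := by
    rw [hDinv, Matrix.diagonal_mul_diagonal]
    have : (fun i => lam1 i * (lam1 i)⁻¹) = fun _ => (1:ℂ) :=
      funext fun i => mul_inv_cancel₀ (hlam1_ne i)
    rw [this]
    exact Matrix.diagonal_one
  have hDmul' : Dinv * Matrix.diagonal lam1 = 1 := by
    rw [hDinv, Matrix.diagonal_mul_diagonal]
    have : (fun i => (lam1 i)⁻¹ * lam1 i) = fun _ => (1:ℂ) :=
      funext fun i => inv_mul_cancel₀ (hlam1_ne i)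
    rw [this]
    exact Matrix.diagonal_one
  have hDinvEq : (Matrix.diagonal lam1)⁻¹ = Dinv :=
    Matrix.inv_eq_right_inv hDmul
  -- rewrite the matrix in the goal
  have hkey : Ψ2ᴴ * (A * V) * (Ψ1ᴴ * (A * V))⁻¹
      = Matrix.diagonal lam2 * (Ψ2ᴴ * V * (Ψ1ᴴ * V)⁻¹ * Dinv) := by
    rw [hAV1, hAV2, Matrix.mul_inv_rev, hDinvEq]
    simp only [Matrix.mul_assoc]
  rw [hkey]
  -- norm bounds
  have hD2 : ‖(Matrix.diagonal lam2 : Matrix (Fin (k+1)) (Fin (k+1)) ℂ)‖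
      ≤ ‖lam2 0‖ := by
    apply diag_opNorm_le _ _ (norm_nonneg _)
    intro j
    exact hord2 0 j (Fin.zero_le j)
  have hDinvNorm : ‖Dinv‖ ≤ (‖lam1 (Fin.last m)‖)⁻¹ := by
    apply diag_opNorm_le _ _ (by positivity)
    intro i
    rw [norm_inv]
    exact inv_anti₀ habs_pos (hord1 i (Fin.last m) (Fin.le_last i))
  calc ‖Matrix.diagonal lam2 * (Ψ2ᴴ * V * (Ψ1ᴴ * V)⁻¹ * Dinv)‖
      ≤ ‖(Matrix.diagonal lam2 : Matrix (Fin (k+1)) (Fin (k+1)) ℂ)‖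
        * ‖Ψ2ᴴ * V * (Ψ1ᴴ * V)⁻¹ * Dinv‖ := Matrix.l2_opNorm_mul _ _
    _ ≤ ‖(Matrix.diagonal lam2 : Matrix (Fin (k+1)) (Fin (k+1)) ℂ)‖
        * (‖Ψ2ᴴ * V * (Ψ1ᴴ * V)⁻¹‖ * ‖Dinv‖) := by
        gcongr ?_ * ?_
        · exact Matrix.l2_opNorm_mul _ _
    _ ≤ ‖lam2 0‖
        * (‖Ψ2ᴴ * V * (Ψ1ᴴ * V)⁻¹‖ * (‖lam1 (Fin.last m)‖)⁻¹) := by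
        gcongr

    _ = (‖lam2 0‖ / ‖lam1 (Fin.last m)‖)
        * ‖Ψ2ᴴ * V * (Ψ1ᴴ * V)⁻¹‖ := by
        field_simp
end

section
/- Let A be Hermitian with eigendecomposition as above, V ∈ ℂ^{n×m}, Φ ∈ ℂ^{m×m} invertible with Ψ_{≤m}^* V Φ invertible, E ∈ ℂ^{n×m}, and V' = A V Φ + E with Ψ_{≤m}^* V' invertible. If ‖E‖_2 / |λ_m| < (1/κ_2(Ψ_{≤m}^* V Φ) - |λ_{m+1}/λ_m|) · ‖Ψ_{≤m}^* V Φ‖_2 · ‖Ψ_{>m}^* V Φ‖_2 / ‖V Φ‖_2, then σ_1(T_{V'}) < σ_1(T_{VΦ}), where T_W = Ψ_{>m}^* W (Ψ_{≤m}^* W)^{-1} and κ_2 is the spectral condition number. Consequently the largest principal angle between range(V') and range(Ψ_{≤m}) is strictly smaller than that between range(V) and range(Ψ_{≤m}). -/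
open Matrix
open scoped Matrix.Norms.L2Operator

/-- The smallest singular value of a square complex matrix, as the infimum of `‖Xv‖` over
unit vectors `v`. -/
noncomputable def smallestSingularValue {m : ℕ} (X : Matrix (Fin m) (Fin m) ℂ) : ℝ :=
  ⨅ v : {v : EuclideanSpace ℂ (Fin m) // ‖v‖ = 1}, ‖Matrix.toEuclideanLin X v.1‖

/-- The spectral (2-norm) condition number `κ₂(X) = σ₁(X)/σ_m(X)`. -/
noncomputable def cond2 {m : ℕ} (X : Matrix (Fin m) (Fin m) ℂ) : ℝ :=
  ‖X‖ / smallestSingularValue X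

namespace Stmt9Aux

/-- Matrix–vector multiplication as a map of Euclidean spaces. -/
noncomputable def mve {a b : ℕ} (M : Matrix (Fin a) (Fin b) ℂ) (x : EuclideanSpace ℂ (Fin b)) :
    EuclideanSpace ℂ (Fin a) :=
  (WithLp.equiv 2 (Fin a → ℂ)).symm (M *ᵥ (WithLp.equiv 2 (Fin b → ℂ)) x)

lemma norm_mve_le {a b : ℕ} (M : Matrix (Fin a) (Fin b) ℂ) (x : EuclideanSpace ℂ (Fin b)) :
    ‖mve M x‖ ≤ ‖M‖ * ‖x‖ :=
  Matrix.l2_opNorm_mulVec M x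

lemma mve_mve {a b c : ℕ} (M : Matrix (Fin a) (Fin b) ℂ) (N : Matrix (Fin b) (Fin c) ℂ)
    (x : EuclideanSpace ℂ (Fin c)) : mve M (mve N x) = mve (M * N) x := by
  simp [mve, mulVec_mulVec]

lemma mve_add {a b : ℕ} (M N : Matrix (Fin a) (Fin b) ℂ) (x : EuclideanSpace ℂ (Fin b)) :
    mve (M + N) x = mve M x + mve N x := by
  ext i
  simp [mve, add_mulVec]

lemma mve_one {a : ℕ} (x : EuclideanSpace ℂ (Fin a)) : mve 1 x = x := by
  ext i
  simp [mve]

lemma mve_smul {a b : ℕ} (M : Matrix (Fin a) (Fin b) ℂ) (c : ℂ) (x : EuclideanSpace ℂ (Fin b)) :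
    mve M (c • x) = c • mve M x := by
  ext i
  simp [mve, mulVec_smul]

lemma inner_mve_self {a b : ℕ} (B : Matrix (Fin a) (Fin b) ℂ) (w : EuclideanSpace ℂ (Fin a)) :
    (inner ℂ (mve Bᴴ w) (mve Bᴴ w) : ℂ)
      = dotProduct (star (WithLp.equiv 2 _ w)) ((B * Bᴴ) *ᵥ (WithLp.equiv 2 _ w)) := by
  rw [EuclideanSpace.inner_eq_star_dotProduct, dotProduct_comm]
  simp only [mve, WithLp.equiv_symm_apply, WithLp.equiv_apply, WithLp.ofLp_toLp]
  rw [star_mulVec, conjTranspose_conjTranspose, ← mulVec_mulVec, dotProduct_mulVec,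
    dotProduct_mulVec, dotProduct_mulVec]

lemma pyth {a b c : ℕ} (P : Matrix (Fin a) (Fin b) ℂ) (Q : Matrix (Fin a) (Fin c) ℂ)
    (hcomp : P * Pᴴ + Q * Qᴴ = 1) (w : EuclideanSpace ℂ (Fin a)) :
    ‖mve Pᴴ w‖ ^ 2 + ‖mve Qᴴ w‖ ^ 2 = ‖w‖ ^ 2 := by
  have h1 := norm_sq_eq_re_inner (𝕜 := ℂ) (mve Pᴴ w)
  have h2 := norm_sq_eq_re_inner (𝕜 := ℂ) (mve Qᴴ w)
  have h3 := norm_sq_eq_re_inner (𝕜 := ℂ) w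
  rw [h1, h2, h3, inner_mve_self, inner_mve_self, ← map_add, ← dotProduct_add,
    ← add_mulVec, hcomp, one_mulVec, EuclideanSpace.inner_eq_star_dotProduct, dotProduct_comm]
  rfl

lemma norm_mve_diagonal_le {a : ℕ} (d : Fin a → ℂ) (c : ℝ) (hc : 0 ≤ c)
    (h : ∀ i, ‖d i‖ ≤ c) (x : EuclideanSpace ℂ (Fin a)) :
    ‖mve (diagonal d) x‖ ≤ c * ‖x‖ := by
  rw [EuclideanSpace.norm_eq, EuclideanSpace.norm_eq]
  have hcoord : ∀ i, (mve (diagonal d) x) i = d i * x i := by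
    intro i; simp [mve, mulVec_diagonal]
  calc √(∑ i, ‖(mve (diagonal d) x) i‖ ^ 2) ≤ √(∑ i, c ^ 2 * ‖x i‖ ^ 2) := by
        apply Real.sqrt_le_sqrt
        apply Finset.sum_le_sum
        intro i _
        rw [hcoord i, norm_mul]
        have hd := h i
        have h2 : ‖d i‖ = ‖d i‖ := rfl
        rw [← h2] at hd
        have hd2 : ‖d i‖ ^ 2 ≤ c ^ 2 := by nlinarith [norm_nonneg (d i)]
        rw [mul_pow]
        exact mul_le_mul_of_nonneg_right hd2 (sq_nonneg _)
    _ = c * √(∑ i, ‖x i‖ ^ 2) := by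
        rw [← Finset.mul_sum, Real.sqrt_mul (by positivity), Real.sqrt_sq hc]

lemma norm_mve_diagonal_ge {a : ℕ} (d : Fin a → ℂ) (c : ℝ) (hc : 0 ≤ c)
    (h : ∀ i, c ≤ ‖d i‖) (x : EuclideanSpace ℂ (Fin a)) :
    c * ‖x‖ ≤ ‖mve (diagonal d) x‖ := by
  rw [EuclideanSpace.norm_eq, EuclideanSpace.norm_eq]
  have hcoord : ∀ i, (mve (diagonal d) x) i = d i * x i := by
    intro i; simp [mve, mulVec_diagonal]
  calc c * √(∑ i, ‖x i‖ ^ 2) = √(∑ i, c ^ 2 * ‖x i‖ ^ 2) := by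
        rw [← Finset.mul_sum, Real.sqrt_mul (by positivity), Real.sqrt_sq hc]
    _ ≤ √(∑ i, ‖(mve (diagonal d) x) i‖ ^ 2) := by
        apply Real.sqrt_le_sqrt
        apply Finset.sum_le_sum
        intro i _
        rw [hcoord i, norm_mul]
        have hd := h i
        have h2 : ‖d i‖ = ‖d i‖ := rfl
        rw [← h2] at hd
        have hd2 : c ^ 2 ≤ ‖d i‖ ^ 2 := by nlinarith [norm_nonneg (d i)]
        rw [mul_pow]
        exact mul_le_mul_of_nonneg_right hd2 (sq_nonneg _)

lemma opNorm_le_of_mve {a b : ℕ} (M : Matrix (Fin a) (Fin b) ℂ) {c : ℝ} (hc : 0 ≤ c)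
    (h : ∀ x : EuclideanSpace ℂ (Fin b), ‖mve M x‖ ≤ c * ‖x‖) : ‖M‖ ≤ c := by
  rw [Matrix.l2_opNorm_def]
  exact ContinuousLinearMap.opNorm_le_bound _ hc fun x => h x

lemma ssv_le_norm_mve {p : ℕ} (X : Matrix (Fin p) (Fin p) ℂ) (v : EuclideanSpace ℂ (Fin p))
    (hv : ‖v‖ = 1) : smallestSingularValue X ≤ ‖mve X v‖ := by
  have : BddBelow (Set.range fun v : {v : EuclideanSpace ℂ (Fin p) // ‖v‖ = 1} =>
      ‖Matrix.toEuclideanLin X v.1‖) := ⟨0, by rintro _ ⟨u, rfl⟩; positivity⟩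
  exact ciInf_le this ⟨v, hv⟩

lemma ssv_mul_norm_le {p : ℕ} (X : Matrix (Fin p) (Fin p) ℂ) (v : EuclideanSpace ℂ (Fin p)) :
    smallestSingularValue X * ‖v‖ ≤ ‖mve X v‖ := by
  rcases eq_or_ne v 0 with rfl | hv
  · have : mve X (0 : EuclideanSpace ℂ (Fin p)) = 0 := by ext i; simp [mve]
    simp [this]
  · set u : EuclideanSpace ℂ (Fin p) := (‖v‖⁻¹ : ℂ) • v with hu
    have hu1 : ‖u‖ = 1 := norm_smul_inv_norm hv
    have h1 := ssv_le_norm_mve X u hu1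
    rw [hu, mve_smul, norm_smul] at h1
    have hvpos : (0:ℝ) < ‖v‖ := norm_pos_iff.mpr hv
    have h2 : ‖(‖v‖⁻¹ : ℂ)‖ = ‖v‖⁻¹ := by simp [norm_inv]
    rw [h2] at h1
    calc smallestSingularValue X * ‖v‖ ≤ ‖v‖⁻¹ * ‖mve X v‖ * ‖v‖ :=
          mul_le_mul_of_nonneg_right h1 hvpos.le
      _ = ‖mve X v‖ := by field_simp

lemma ssv_le_opNorm {p : ℕ} (X : Matrix (Fin (p+1)) (Fin (p+1)) ℂ) :
    smallestSingularValue X ≤ ‖X‖ := by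
  have h1 := ssv_le_norm_mve X (EuclideanSpace.single 0 1)
    (by rw [EuclideanSpace.norm_single]; simp)
  have h2 := norm_mve_le X (EuclideanSpace.single 0 1)
  rw [EuclideanSpace.norm_single] at h2
  simpa using h1.trans h2


/-- Scalar arithmetic: positivity of the progress margin δ. -/
lemma delta_pos (lm mu σ nX nY nV nE t s : ℝ)
    (hlm0 : 0 < lm) (hmu0 : 0 ≤ mu) (hmulm : mu < lm) (ht : 0 < t)
    (hYn : 0 < nY) (hXn : 0 < nX) (hVn : 0 < nV) (hE0 : 0 ≤ nE)
    (hσX : σ ≤ nX) (hs0 : 0 < s)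
    (hEraw : nE * nV < (σ / nX - mu / lm) * nX * nY * lm)
    (hC : nY * s ≤ t * nV) :
    0 < t * (lm - mu) * σ - s * nE := by
  have key : nE * nV < (lm * σ - mu * nX) * nY := by
    have heq : (σ / nX - mu / lm) * nX * nY * lm = (lm * σ - mu * nX) * nY := by
      field_simp
    exact hEraw.trans_eq heq
  have hgapσ : 0 < lm * σ - mu * nX := by
    nlinarith [key, mul_nonneg hE0 hVn.le, hYn]
  have hσ : 0 < σ := by nlinarith [hgapσ, mul_nonneg hmu0 hXn.le, hlm0]
  have hstep : lm * σ - mu * nX ≤ (lm - mu) * σ := by nlinarith [hσX, hmu0]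
  have k1 : s * (nE * nV) < s * ((lm * σ - mu * nX) * nY) :=
    mul_lt_mul_of_pos_left key hs0
  have k2 : (lm * σ - mu * nX) * nY ≤ (lm - mu) * σ * nY :=
    mul_le_mul_of_nonneg_right hstep hYn.le
  have k2' : s * ((lm * σ - mu * nX) * nY) ≤ s * ((lm - mu) * σ * nY) :=
    mul_le_mul_of_nonneg_left k2 hs0.le
  have k4 : (lm - mu) * σ * (nY * s) ≤ (lm - mu) * σ * (t * nV) :=
    mul_le_mul_of_nonneg_left hC (mul_nonneg (sub_nonneg.mpr hmulm.le) hσ.le)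
  have k5 : s * nE * nV < (lm - mu) * σ * t * nV := by nlinarith [k1, k2', k4]
  have k6 : s * nE < (lm - mu) * σ * t := lt_of_mul_lt_mul_right k5 hVn.le
  nlinarith [k6]

/-- Scalar Cauchy–Schwarz step: `t·a + b ≤ √(1+t²)·c` when `a² + b² ≤ c²`. -/
lemma cs_step (t s a b c : ℝ) (ht : 0 ≤ t) (hs0 : 0 < s) (hs2 : s ^ 2 = 1 + t ^ 2)
    (ha : 0 ≤ a) (hb : 0 ≤ b) (hc : 0 ≤ c) (h : a ^ 2 + b ^ 2 ≤ c ^ 2) :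
    t * a + b ≤ s * c := by
  have h1 : (t * a + b) ^ 2 ≤ (s * c) ^ 2 := by
    rw [mul_pow, hs2]
    nlinarith [sq_nonneg (a - t * b)]
  have h2 : 0 ≤ t * a + b := by positivity
  nlinarith [h1, h2, mul_nonneg hs0.le hc]

/-- Scalar step for the angle bound: `ny·s ≤ t·nw` when `nx² + ny² = nw²`, `ny ≤ t·nx`. -/
lemma angle_step (t s nx ny nw : ℝ) (ht : 0 < t) (hs0 : 0 < s) (hs2 : s ^ 2 = 1 + t ^ 2)
    (hx : 0 ≤ nx) (hy : 0 ≤ ny) (hw : 0 ≤ nw)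
    (hpy : nx ^ 2 + ny ^ 2 = nw ^ 2) (hyx : ny ≤ t * nx) :
    ny * s ≤ t * nw := by
  have h1 : (ny * s) ^ 2 ≤ (t * nw) ^ 2 := by
    rw [mul_pow, mul_pow, hs2]
    nlinarith [hyx, mul_le_mul hyx hyx hy (mul_nonneg ht.le hx)]
  have h2 : 0 ≤ ny * s := by positivity
  nlinarith [h1, h2, mul_nonneg ht.le hw]

lemma le_div_mul (s x yv nv : ℝ) (hs : 0 < s) (hnv : 0 ≤ nv) (h : x * s ≤ yv * nv) :
    x ≤ yv / s * nv := by
  rw [div_mul_eq_mul_div, le_div_iff₀ hs]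
  exact h

lemma mul_le_of_le_div (s x A : ℝ) (hs : 0 < s) (h : x ≤ A / s) : x * s ≤ A :=
  (le_div_iff₀ hs).mp h

lemma sq_mono (x y z : ℝ) (hy : 0 ≤ y) (hz : 0 ≤ z) (hxy : x = y) (h : y ≤ z) :
    x ^ 2 ≤ z ^ 2 := by nlinarith

/-- Final pointwise assembly. -/
lemma assemble (t s lm mu σ δ nB nE a b nu nv nxv nyv nCv : ℝ)
    (ht : 0 < t) (hmu0 : 0 ≤ mu) (hmulm : mu < lm) (hB : 0 < nB)
    (hnv : 0 ≤ nv) (hnu : 0 ≤ nu)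
    (hCv : nCv ≤ mu * nyv + b)
    (hYv : nyv ≤ t * nxv)
    (hBv : lm * nxv - a ≤ nu)
    (hub : nu ≤ nB * nv)
    (hxσ : σ * nv ≤ nxv)
    (hCS : t * a + b ≤ s * (nE * nv))
    (hδ : δ = t * (lm - mu) * σ - s * nE)
    (hδpos : 0 < δ) :
    nCv ≤ (t - δ / nB) * nu := by
  have p4 : mu * nyv ≤ mu * (t * nxv) := mul_le_mul_of_nonneg_left hYv hmu0
  have p5 : t * (lm * nxv - a) ≤ t * nu := mul_le_mul_of_nonneg_left hBv ht.le
  have p2 : δ / nB * nu ≤ δ * nv := by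
    calc δ / nB * nu ≤ δ / nB * (nB * nv) :=
          mul_le_mul_of_nonneg_left hub (div_nonneg hδpos.le hB.le)
      _ = δ * nv := by
          field_simp
  have p1 : t * (lm - mu) * (σ * nv) ≤ t * (lm - mu) * nxv :=
    mul_le_mul_of_nonneg_left hxσ (mul_nonneg ht.le (sub_nonneg.mpr hmulm.le))
  have hδv : δ * nv = t * (lm - mu) * σ * nv - s * nE * nv := by rw [hδ]; ring
  nlinarith [hCv, p4, p5, p2, p1, hδv, hCS]


end Stmt9Aux

set_option maxHeartbeats 8000000 in
open Stmt9Aux in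
/-- Inexact subspace iteration makes progress. `A` Hermitian with unitary
eigenvector matrix `Ψ = [Ψ₁, Ψ₂]`, eigenvalue magnitudes non-increasing in each block,
`|λ_{m+1}| < |λ_m|` (with `λ_m = lam1 (Fin.last m)`, `λ_{m+1} = lam2 0`), `λ_m ≠ 0`.
With `Φ` invertible, `Ψ₁ᴴ V Φ` invertible, truncation error matrix `E`,
`V' = A V Φ + E` with `Ψ₁ᴴ V'` invertible and `Ψ₂ᴴ V Φ ≠ 0`: if
`‖E‖₂/|λ_m| < (1/κ₂(Ψ₁ᴴ V Φ) - |λ_{m+1}/λ_m|)·‖Ψ₁ᴴ V Φ‖₂·‖Ψ₂ᴴ V Φ‖₂/‖V Φ‖₂`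
then `σ₁(T_{V'}) < σ₁(T_{VΦ})`, i.e. the largest principal angle between `range(V')` and
`range(Ψ₁)` is strictly smaller than that between `range(V)` and `range(Ψ₁)`. -/
theorem stmt9 {m k : ℕ}
    (A : Matrix (Fin (m + 1 + (k + 1))) (Fin (m + 1 + (k + 1))) ℂ)
    (hA : A.IsHermitian)
    (Ψ1 : Matrix (Fin (m + 1 + (k + 1))) (Fin (m + 1)) ℂ)
    (Ψ2 : Matrix (Fin (m + 1 + (k + 1))) (Fin (k + 1)) ℂ)
    (hU11 : Ψ1ᴴ * Ψ1 = 1) (hU22 : Ψ2ᴴ * Ψ2 = 1) (hU12 : Ψ1ᴴ * Ψ2 = 0)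
    (hcomplete : Ψ1 * Ψ1ᴴ + Ψ2 * Ψ2ᴴ = 1)
    (lam1 : Fin (m + 1) → ℂ) (lam2 : Fin (k + 1) → ℂ)
    (heig1 : A * Ψ1 = Ψ1 * Matrix.diagonal lam1)
    (heig2 : A * Ψ2 = Ψ2 * Matrix.diagonal lam2)
    (hord1 : ∀ i i' : Fin (m + 1), i ≤ i' → ‖lam1 i'‖ ≤ ‖lam1 i‖)
    (hord2 : ∀ j j' : Fin (k + 1), j ≤ j' → ‖lam2 j'‖ ≤ ‖lam2 j‖)
    (hgap : ‖lam2 0‖ < ‖lam1 (Fin.last m)‖)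
    (hm0 : lam1 (Fin.last m) ≠ 0)
    (V : Matrix (Fin (m + 1 + (k + 1))) (Fin (m + 1)) ℂ)
    (Φ : Matrix (Fin (m + 1)) (Fin (m + 1)) ℂ) (hΦ : IsUnit Φ)
    (E : Matrix (Fin (m + 1 + (k + 1))) (Fin (m + 1)) ℂ)
    (V' : Matrix (Fin (m + 1 + (k + 1))) (Fin (m + 1)) ℂ)
    (hV' : V' = A * V * Φ + E)
    (hVΦ : IsUnit (Ψ1ᴴ * (V * Φ)))
    (hV'inv : IsUnit (Ψ1ᴴ * V'))
    (hne : Ψ2ᴴ * (V * Φ) ≠ 0)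
    (hE : ‖E‖ / ‖lam1 (Fin.last m)‖
        < (1 / cond2 (Ψ1ᴴ * (V * Φ))
            - ‖lam2 0‖ / ‖lam1 (Fin.last m)‖)
          * ‖Ψ1ᴴ * (V * Φ)‖ * ‖Ψ2ᴴ * (V * Φ)‖ / ‖V * Φ‖) :
    ‖Ψ2ᴴ * V' * (Ψ1ᴴ * V')⁻¹‖ < ‖Ψ2ᴴ * (V * Φ) * (Ψ1ᴴ * (V * Φ))⁻¹‖ := by
  set X : Matrix (Fin (m + 1)) (Fin (m + 1)) ℂ := Ψ1ᴴ * (V * Φ) with hXdef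
  set Y : Matrix (Fin (k + 1)) (Fin (m + 1)) ℂ := Ψ2ᴴ * (V * Φ) with hYdef
  set T : Matrix (Fin (k + 1)) (Fin (m + 1)) ℂ := Y * X⁻¹ with hTdef
  clear_value X Y T
  -- basic invertibility facts
  have hXdetu : IsUnit X.det := (Matrix.isUnit_iff_isUnit_det X).mp hVΦ
  have hXinv2 : X⁻¹ * X = 1 := Matrix.nonsing_inv_mul X hXdetu
  have hB'detu : IsUnit (Ψ1ᴴ * V').det := (Matrix.isUnit_iff_isUnit_det _).mp hV'inv
  have hB'inv : (Ψ1ᴴ * V') * (Ψ1ᴴ * V')⁻¹ = 1 := Matrix.mul_nonsing_inv _ hB'detu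
  have hTX : T * X = Y := by rw [hTdef, Matrix.mul_assoc, hXinv2, Matrix.mul_one]
  -- scalars
  set lm : ℝ := ‖lam1 (Fin.last m)‖ with hlm
  set mu : ℝ := ‖lam2 0‖ with hmu
  set t : ℝ := ‖T‖ with htdef
  set σ : ℝ := smallestSingularValue X with hσdef
  have hlm0 : 0 < lm := by rw [hlm]; exact norm_pos_iff.mpr hm0
  have hmu0 : 0 ≤ mu := by rw [hmu]; exact norm_nonneg _
  have hmulm : mu < lm := hgap
  have hT0 : T ≠ 0 := by
    intro h
    exact hne (by rw [← hTX, h, Matrix.zero_mul])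
  have ht : 0 < t := by rw [htdef]; exact norm_pos_iff.mpr hT0
  have hYn : 0 < ‖Y‖ := norm_pos_iff.mpr hne
  have hXne : X ≠ 0 := by
    intro h
    have h1 : (1 : Matrix (Fin (m+1)) (Fin (m+1)) ℂ) = 0 := by
      rw [← hXinv2, h, Matrix.mul_zero]
    have h2 := congrFun (congrFun h1 0) 0
    simp [Matrix.one_apply] at h2
  have hXn : 0 < ‖X‖ := norm_pos_iff.mpr hXne
  have hVΦne : V * Φ ≠ 0 := by
    intro h
    exact hne (by rw [hYdef, h, Matrix.mul_zero])
  have hVΦn : 0 < ‖V * Φ‖ := norm_pos_iff.mpr hVΦne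
  have hB'ne : Ψ1ᴴ * V' ≠ 0 := by
    intro h
    have h1 : (1 : Matrix (Fin (m+1)) (Fin (m+1)) ℂ) = 0 := by
      rw [← hB'inv, h, Matrix.zero_mul]
    have h2 := congrFun (congrFun h1 0) 0
    simp [Matrix.one_apply] at h2
  have hB'n : 0 < ‖Ψ1ᴴ * V'‖ := norm_pos_iff.mpr hB'ne
  have hσX : σ ≤ ‖X‖ := by rw [hσdef]; exact ssv_le_opNorm X
  have hσmul : ∀ v : EuclideanSpace ℂ (Fin (m + 1)), σ * ‖v‖ ≤ ‖mve X v‖ := by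
    intro v
    rw [hσdef]
    exact ssv_mul_norm_le X v
  clear_value lm mu t σ
  -- main inequality from hE
  have hcond : 1 / cond2 X = σ / ‖X‖ := by rw [cond2, one_div_div, hσdef]
  rw [hcond, div_lt_div_iff₀ hlm0 hVΦn] at hE
  -- s = sqrt(1+t^2)
  set s : ℝ := Real.sqrt (1 + t ^ 2) with hsdef
  have hs2 : s ^ 2 = 1 + t ^ 2 := by rw [hsdef]; exact Real.sq_sqrt (by positivity)
  have hs0 : 0 < s := by rw [hsdef]; exact Real.sqrt_pos.mpr (by positivity)
  clear_value s
  -- ‖Y‖ * s ≤ t * ‖V*Φ‖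
  have hC : ‖Y‖ * s ≤ t * ‖V * Φ‖ := by
    apply mul_le_of_le_div s ‖Y‖ (t * ‖V * Φ‖) hs0
    apply opNorm_le_of_mve Y (div_nonneg (mul_nonneg ht.le (norm_nonneg _)) hs0.le)
    intro v
    apply le_div_mul s ‖mve Y v‖ (t * ‖V * Φ‖) ‖v‖ hs0 (norm_nonneg v)
    have hpy := pyth Ψ1 Ψ2 hcomplete (mve (V * Φ) v)
    rw [mve_mve, mve_mve, ← hXdef, ← hYdef] at hpy
    have hYv : ‖mve Y v‖ ≤ t * ‖mve X v‖ := by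
      have h1 : mve Y v = mve T (mve X v) := by rw [mve_mve, hTX]
      rw [h1, htdef]
      exact norm_mve_le T _
    have h2 : ‖mve Y v‖ * s ≤ t * ‖mve (V * Φ) v‖ :=
      angle_step t s ‖mve X v‖ ‖mve Y v‖ ‖mve (V * Φ) v‖ ht hs0 hs2
        (norm_nonneg _) (norm_nonneg _) (norm_nonneg _) hpy hYv
    calc ‖mve Y v‖ * s ≤ t * ‖mve (V * Φ) v‖ := h2
      _ ≤ t * (‖V * Φ‖ * ‖v‖) := mul_le_mul_of_nonneg_left (norm_mve_le _ _) ht.le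
      _ = t * ‖V * Φ‖ * ‖v‖ := (mul_assoc t ‖V * Φ‖ ‖v‖).symm
  -- δ > 0
  set δ : ℝ := t * (lm - mu) * σ - s * ‖E‖ with hδdef
  clear_value δ
  have hδpos : 0 < δ := by
    rw [hδdef]
    exact delta_pos lm mu σ ‖X‖ ‖Y‖ ‖V * Φ‖ ‖E‖ t s hlm0 hmu0 hmulm ht hYn hXn hVΦn
      (norm_nonneg E) hσX hs0 hE hC
  -- eigen decompositions of the blocks
  have hΨ1A : Ψ1ᴴ * A = Matrix.diagonal (star lam1) * Ψ1ᴴ := by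
    calc Ψ1ᴴ * A = Ψ1ᴴ * Aᴴ := by rw [hA.eq]
      _ = (A * Ψ1)ᴴ := (conjTranspose_mul A Ψ1).symm
      _ = (Ψ1 * Matrix.diagonal lam1)ᴴ := by rw [heig1]
      _ = Matrix.diagonal (star lam1) * Ψ1ᴴ := by
          rw [conjTranspose_mul, diagonal_conjTranspose]
  have hΨ2A : Ψ2ᴴ * A = Matrix.diagonal (star lam2) * Ψ2ᴴ := by
    calc Ψ2ᴴ * A = Ψ2ᴴ * Aᴴ := by rw [hA.eq]
      _ = (A * Ψ2)ᴴ := (conjTranspose_mul A Ψ2).symm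
      _ = (Ψ2 * Matrix.diagonal lam2)ᴴ := by rw [heig2]
      _ = Matrix.diagonal (star lam2) * Ψ2ᴴ := by
          rw [conjTranspose_mul, diagonal_conjTranspose]
  have hB'eq : Ψ1ᴴ * V' = Matrix.diagonal (star lam1) * X + Ψ1ᴴ * E := by
    rw [hV', Matrix.mul_add]
    congr 1
    rw [hXdef, ← Matrix.mul_assoc, ← Matrix.mul_assoc, ← Matrix.mul_assoc, hΨ1A]
    simp [Matrix.mul_assoc]
  have hC'eq : Ψ2ᴴ * V' = Matrix.diagonal (star lam2) * Y + Ψ2ᴴ * E := by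
    rw [hV', Matrix.mul_add]
    congr 1
    rw [hYdef, ← Matrix.mul_assoc, ← Matrix.mul_assoc, ← Matrix.mul_assoc, hΨ2A]
    simp [Matrix.mul_assoc]
  have hord1' : ∀ i, lm ≤ ‖star lam1 i‖ := by
    intro i
    rw [show star lam1 i = (starRingEnd ℂ) (lam1 i) from rfl, Complex.norm_conj, hlm]
    exact hord1 i (Fin.last m) (Fin.le_last i)
  have hord2' : ∀ j, ‖star lam2 j‖ ≤ mu := by
    intro j
    rw [show star lam2 j = (starRingEnd ℂ) (lam2 j) from rfl, Complex.norm_conj, hmu]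
    exact hord2 0 j (Fin.zero_le j)
  -- pointwise bound
  set c : ℝ := t - δ / ‖Ψ1ᴴ * V'‖ with hcdef
  clear_value c
  have hpt : ∀ u : EuclideanSpace ℂ (Fin (m + 1)),
      ‖mve (Ψ2ᴴ * V' * (Ψ1ᴴ * V')⁻¹) u‖ ≤ c * ‖u‖ := by
    intro u
    obtain ⟨v, hvdef⟩ : ∃ v : EuclideanSpace ℂ (Fin (m + 1)),
        v = mve (Ψ1ᴴ * V')⁻¹ u := ⟨_, rfl⟩
    have hmain : ‖mve (Ψ2ᴴ * V' * (Ψ1ᴴ * V')⁻¹) u‖ = ‖mve (Ψ2ᴴ * V') v‖ := by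
      rw [hvdef, mve_mve]
    have huv : mve (Ψ1ᴴ * V') v = u := by rw [hvdef, mve_mve, hB'inv, mve_one]
    have hub : ‖u‖ ≤ ‖Ψ1ᴴ * V'‖ * ‖v‖ := by rw [← huv]; exact norm_mve_le _ _
    obtain ⟨w, hwdef⟩ : ∃ w : EuclideanSpace ℂ (Fin (m + 1 + (k + 1))),
        w = mve E v := ⟨_, rfl⟩
    have hpy := pyth Ψ1 Ψ2 hcomplete w
    have hwE : ‖w‖ ≤ ‖E‖ * ‖v‖ := by rw [hwdef]; exact norm_mve_le _ _
    set a : ℝ := ‖mve Ψ1ᴴ w‖ with hadef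
    set b : ℝ := ‖mve Ψ2ᴴ w‖ with hbdef
    have ha0 : 0 ≤ a := norm_nonneg _
    have hb0 : 0 ≤ b := norm_nonneg _
    have hE1 : ‖mve (Ψ1ᴴ * E) v‖ = a := by rw [hadef, hwdef, mve_mve]
    have hE2 : ‖mve (Ψ2ᴴ * E) v‖ = b := by rw [hbdef, hwdef, mve_mve]
    clear_value a b
    have hxσ : σ * ‖v‖ ≤ ‖mve X v‖ := hσmul v
    have hYv : ‖mve Y v‖ ≤ t * ‖mve X v‖ := by
      have h1 : mve Y v = mve T (mve X v) := by rw [mve_mve, hTX]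
      rw [h1, htdef]
      exact norm_mve_le T _
    have hCv : ‖mve (Ψ2ᴴ * V') v‖ ≤ mu * ‖mve Y v‖ + b := by
      rw [hC'eq, mve_add]
      refine (norm_add_le _ _).trans ?_
      have h1 : ‖mve (Matrix.diagonal (star lam2) * Y) v‖ ≤ mu * ‖mve Y v‖ := by
        rw [← mve_mve]
        exact norm_mve_diagonal_le _ mu hmu0 hord2' _
      rw [hE2]
      exact add_le_add_left h1 b
    have hBv : lm * ‖mve X v‖ - a ≤ ‖u‖ := by
      rw [← huv, hB'eq, mve_add]
      have h1 : lm * ‖mve X v‖ ≤ ‖mve (Matrix.diagonal (star lam1) * X) v‖ := by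
        rw [← mve_mve]
        exact norm_mve_diagonal_ge _ lm hlm0.le hord1' _
      have h3 : ‖mve (Matrix.diagonal (star lam1) * X) v‖ ≤
          ‖mve (Matrix.diagonal (star lam1) * X) v + mve (Ψ1ᴴ * E) v‖ + ‖mve (Ψ1ᴴ * E) v‖ :=
        norm_le_add_norm_add _ _
      rw [hE1] at h3
      linarith
    have hab : a ^ 2 + b ^ 2 ≤ (‖E‖ * ‖v‖) ^ 2 := by
      rw [hpy]
      exact pow_le_pow_left₀ (norm_nonneg w) hwE 2
    have hCS : t * a + b ≤ s * (‖E‖ * ‖v‖) :=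
      cs_step t s a b (‖E‖ * ‖v‖) ht.le hs0 hs2 ha0 hb0
        (mul_nonneg (norm_nonneg E) (norm_nonneg v)) hab
    rw [hmain, hcdef]
    exact assemble t s lm mu σ δ ‖Ψ1ᴴ * V'‖ ‖E‖ a b ‖u‖ ‖v‖ ‖mve X v‖ ‖mve Y v‖
      ‖mve (Ψ2ᴴ * V') v‖ ht hmu0 hmulm hB'n (norm_nonneg v) (norm_nonneg u)
      hCv hYv hBv hub hxσ hCS hδdef hδpos
  have hc0 : 0 ≤ c := by
    have h1 := hpt (EuclideanSpace.single 0 1)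
    have h2 : ‖(EuclideanSpace.single 0 1 : EuclideanSpace ℂ (Fin (m + 1)))‖ = 1 := by
      rw [EuclideanSpace.norm_single]; simp
    rw [h2, mul_one] at h1
    exact le_trans (norm_nonneg _) h1
  have hle : ‖Ψ2ᴴ * V' * (Ψ1ᴴ * V')⁻¹‖ ≤ c := opNorm_le_of_mve _ hc0 hpt
  have hct : c < t := by
    rw [hcdef]
    exact sub_lt_self t (div_pos hδpos hB'n)
  exact lt_of_le_of_lt hle hct
end

section
/- Let A be Hermitian with orthonormal eigenbasis {ψ_j} and real eigenvalues λ_1 < λ_2 ≤ ... ≤ λ_n, and let p be any polynomial with |p(λ_1)| > max_{j ≥ 2} |p(λ_j)|. Then for any vector v with ⟨ψ_1, v⟩ ≠ 0, tan ∠(p(A)v, ψ_1) ≤ (max_{j≥2}|p(λ_j)| / |p(λ_1)|) · tan ∠(v, ψ_1), where tan ∠(w, ψ_1) = ‖(I − ψ_1ψ_1^*)w‖ / ‖ψ_1ψ_1^* w‖. -/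
open Matrix Polynomial

lemma aux_eig {n : ℕ} (A : Matrix (Fin (n + 2)) (Fin (n + 2)) ℂ)
    (ψ : Fin (n + 2) → EuclideanSpace ℂ (Fin (n + 2)))
    (lam : Fin (n + 2) → ℝ)
    (heig : ∀ j, Matrix.toEuclideanLin A (ψ j) = (lam j : ℂ) • ψ j)
    (q : Polynomial ℂ) (j : Fin (n + 2)) :
    Matrix.toEuclideanLin (Polynomial.aeval A q) (ψ j)
      = (q.eval ((lam j : ℝ) : ℂ)) • ψ j := by
  have hmul : ∀ (M N : Matrix (Fin (n+2)) (Fin (n+2)) ℂ) x,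
      Matrix.toEuclideanLin (M * N) x
        = Matrix.toEuclideanLin M (Matrix.toEuclideanLin N x) := by
    intro M N x
    simp [Matrix.toEuclideanLin_apply, Matrix.mulVec_mulVec]
  induction q using Polynomial.induction_on with
  | C a =>
      simp [Polynomial.aeval_C, Algebra.algebraMap_eq_smul_one,
        Matrix.toEuclideanLin_apply, Matrix.smul_mulVec, Matrix.one_mulVec]
  | add f g hf hg =>
      simp [map_add, LinearMap.add_apply, hf, hg, add_smul]
  | monomial k a hk =>
      have h1 : (Polynomial.C a * Polynomial.X ^ (k+1))
          = (Polynomial.C a * Polynomial.X ^ k) * Polynomial.X := by ring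
      rw [h1, _root_.map_mul, Polynomial.aeval_X, hmul, heig j, _root_.map_smul, hk,
        smul_smul]
      rw [Polynomial.eval_mul (p := Polynomial.C a * Polynomial.X ^ k), Polynomial.eval_X, mul_comm]



/-- Polynomial-filtered power iteration bound. `A` Hermitian with orthonormal
eigenbasis `ψ` and real eigenvalues `λ₀ < λ₁ ≤ … ≤ λ_{n-1}`; `p` a polynomial with
`|p(λ₀)| > max_{j ≠ 0} |p(λ_j)|`. Then for any `v` with `⟨ψ₀, v⟩ ≠ 0`,
`tan ∠(p(A)v, ψ₀) ≤ (max_{j ≠ 0}|p(λ_j)|/|p(λ₀)|) · tan ∠(v, ψ₀)`,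
where `tan ∠(w, ψ₀) = ‖(I − ψ₀ψ₀ᴴ)w‖/‖ψ₀ψ₀ᴴ w‖`. -/
theorem stmt18 {n : ℕ} (A : Matrix (Fin (n + 2)) (Fin (n + 2)) ℂ)
    (hA : A.IsHermitian)
    (ψ : Fin (n + 2) → EuclideanSpace ℂ (Fin (n + 2)))
    (hortho : Orthonormal ℂ ψ)
    (lam : Fin (n + 2) → ℝ)
    (heig : ∀ j, Matrix.toEuclideanLin A (ψ j) = (lam j : ℂ) • ψ j)
    (hmono : Monotone lam)
    (hstrict : lam 0 < lam 1)
    (p : Polynomial ℂ)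
    (hp : (⨆ j : {j : Fin (n + 2) // j ≠ 0}, ‖p.eval ((lam j.1 : ℝ) : ℂ)‖)
        < ‖p.eval ((lam 0 : ℝ) : ℂ)‖)
    (v : EuclideanSpace ℂ (Fin (n + 2)))
    (hv : (inner ℂ (ψ 0) v : ℂ) ≠ 0) :
    let P : EuclideanSpace ℂ (Fin (n + 2)) → EuclideanSpace ℂ (Fin (n + 2)) :=
      fun w => (inner ℂ (ψ 0) w : ℂ) • ψ 0
    let z : EuclideanSpace ℂ (Fin (n + 2)) :=
      Matrix.toEuclideanLin (Polynomial.aeval A p) v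
    ‖z - P z‖ / ‖P z‖
      ≤ ((⨆ j : {j : Fin (n + 2) // j ≠ 0}, ‖p.eval ((lam j.1 : ℝ) : ℂ)‖)
          / ‖p.eval ((lam 0 : ℝ) : ℂ)‖)
        * (‖v - P v‖ / ‖P v‖) := by
  intro P z
  classical
  set M : ℝ := ⨆ j : {j : Fin (n + 2) // j ≠ 0}, ‖p.eval ((lam j.1 : ℝ) : ℂ)‖ with hM
  set L : ℝ := ‖p.eval ((lam 0 : ℝ) : ℂ)‖ with hL
  -- basic facts about M and L
  have hne : Nonempty {j : Fin (n + 2) // j ≠ 0} := ⟨(⟨1, by simp [Fin.ext_iff]⟩ : {j : Fin (n + 2) // j ≠ 0})⟩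
  have hMle : ∀ j : Fin (n + 2), j ≠ 0 →
      ‖p.eval ((lam j : ℝ) : ℂ)‖ ≤ M := by
    intro j hj
    rw [hM]
    exact le_ciSup (f := fun j : {j : Fin (n + 2) // j ≠ 0} =>
        ‖p.eval ((lam j.1 : ℝ) : ℂ)‖)
      (Set.Finite.bddAbove (Set.finite_range _)) ⟨j, hj⟩
  have hM0 : 0 ≤ M := le_trans (norm_nonneg _) (hMle 1 (by simp [Fin.ext_iff]))
  have hL0 : 0 < L := lt_of_le_of_lt hM0 hp
  -- orthonormal basis
  have hcard : Fintype.card (Fin (n + 2))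
      = Module.finrank ℂ (EuclideanSpace ℂ (Fin (n + 2))) := by simp
  have hspan : ⊤ ≤ Submodule.span ℂ (Set.range ψ) := by
    have h := (basisOfOrthonormalOfCardEqFinrank hortho hcard).span_eq
    rw [coe_basisOfOrthonormalOfCardEqFinrank] at h
    exact h.ge
  set B := OrthonormalBasis.mk hortho hspan with hBdef
  have hB : ⇑B = ψ := OrthonormalBasis.coe_mk hortho hspan
  -- Parseval
  have hpars : ∀ w : EuclideanSpace ℂ (Fin (n + 2)),
      ‖w‖ ^ 2 = ∑ j, ‖(inner ℂ (ψ j) w : ℂ)‖ ^ 2 := by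
    intro w
    rw [← B.repr.norm_map w, PiLp.norm_sq_eq_of_L2]
    refine Finset.sum_congr rfl fun j _ => ?_
    rw [B.repr_apply_apply, hB]
  -- norm of ψ 0
  have hψ0 : ‖ψ 0‖ = 1 := hortho.1 0
  -- coordinates of z
  have hz : z = ∑ i, ((inner ℂ (ψ i) v : ℂ) * p.eval ((lam i : ℝ) : ℂ)) • ψ i := by
    have hv' : v = ∑ i, (inner ℂ (ψ i) v : ℂ) • ψ i := by
      conv_lhs => rw [← B.sum_repr' v]
      simp [hB]
    show Matrix.toEuclideanLin (Polynomial.aeval A p) v = _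
    conv_lhs => rw [hv']
    rw [map_sum]
    refine Finset.sum_congr rfl fun i _ => ?_
    rw [_root_.map_smul, aux_eig A ψ lam heig p i, smul_smul]
  have hcz : ∀ j, (inner ℂ (ψ j) z : ℂ)
      = (inner ℂ (ψ j) v : ℂ) * p.eval ((lam j : ℝ) : ℂ) := by
    intro j
    rw [hz]
    exact hortho.inner_right_fintype _ j
  -- coordinates of w - P w
  have hcoord : ∀ (w : EuclideanSpace ℂ (Fin (n + 2))) (j : Fin (n + 2)),
      (inner ℂ (ψ j) (w - P w) : ℂ) = if j = 0 then 0 else (inner ℂ (ψ j) w : ℂ) := by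
    intro w j
    have : (inner ℂ (ψ j) (P w) : ℂ)
        = (inner ℂ (ψ 0) w : ℂ) * (inner ℂ (ψ j) (ψ 0) : ℂ) := by
      simp [P, inner_smul_right]
    rw [inner_sub_right, this, orthonormal_iff_ite.mp hortho]
    by_cases hj : j = 0 <;> simp [hj]
  -- norms of P w
  have hPnorm : ∀ w : EuclideanSpace ℂ (Fin (n + 2)),
      ‖P w‖ = ‖(inner ℂ (ψ 0) w : ℂ)‖ := by
    intro w
    simp [P, norm_smul, hψ0]
  have hPz : ‖P z‖ = L * ‖(inner ℂ (ψ 0) v : ℂ)‖ := by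
    rw [hPnorm, hcz 0, norm_mul, mul_comm, hL]
  have hPv : ‖P v‖ = ‖(inner ℂ (ψ 0) v : ℂ)‖ := hPnorm v
  have hPv0 : 0 < ‖P v‖ := by
    rw [hPv]; exact norm_pos_iff.2 hv
  -- key inequality on numerators
  have hnum : ‖z - P z‖ ≤ M * ‖v - P v‖ := by
    have hsq : ‖z - P z‖ ^ 2 ≤ (M * ‖v - P v‖) ^ 2 := by
      rw [mul_pow, hpars (z - P z), hpars (v - P v), Finset.mul_sum]
      refine Finset.sum_le_sum fun j _ => ?_
      rw [hcoord z j, hcoord v j]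
      by_cases hj : j = 0
      · simp [hj]
      · simp only [hj, if_false]
        rw [hcz j, norm_mul, mul_pow]
        have h1 : ‖p.eval ((lam j : ℝ) : ℂ)‖ ≤ M := hMle j hj
        have hb2 : ‖p.eval ((lam j : ℝ) : ℂ)‖ ^ 2 ≤ M ^ 2 := by
          nlinarith [norm_nonneg (p.eval ((lam j : ℝ) : ℂ))]
        rw [mul_comm (M ^ 2)]
        exact mul_le_mul_of_nonneg_left hb2 (sq_nonneg _)
    have h0 : (0:ℝ) ≤ M * ‖v - P v‖ := mul_nonneg hM0 (norm_nonneg _)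
    exact (pow_le_pow_iff_left₀ (norm_nonneg _) h0 (by norm_num)).1 hsq
  -- conclude
  rw [hPz, hPv]
  set t : ℝ := ‖(inner ℂ (ψ 0) v : ℂ)‖ with ht
  have ht0 : 0 < t := by rw [ht]; exact norm_pos_iff.2 hv
  have hden : 0 < L * t := mul_pos hL0 ht0
  calc ‖z - P z‖ / (L * t) ≤ (M * ‖v - P v‖) / (L * t) :=
        (div_le_div_iff_of_pos_right hden).2 hnum
    _ = M / L * (‖v - P v‖ / t) := by
        rw [div_mul_div_comm]
end
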